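/- Let a and n be integers with a ≥ 5, n ≥ 3, a(n−2) ≥ 6n−1, and either (a ≡ 1 and n ≡ 3 (mod 4)) or (a ≡ 3 and n ≡ 1 (mod 4)). Then the Sylvester number (genus) of the triple {S_{a,n}, S_{a,n+1}, S_{a,n+2}} equals (1/8)·((a²+16a−12)n³ − (12a+8)n² − (4a²+14a−23)n + 4a − 6). -/

import Mathlib

lemma delta_pos (m e c x y x' y' α β : ℤ) (hm : 0 ≤ m) (he0 : 0 ≤ e) (hc : 1 ≤ c)
    (hx0 : 0 ≤ x) (hy0 : 0 ≤ y) (hx'0 : 0 ≤ x') (hy'0 : 0 ≤ y')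
    (hxb : x < 4*m+12) (hyb : y < 2*m+6+e) (hP : x < 3*m+8 ∨ y < e+1)
    (hne : ¬(x = x' ∧ y = y'))
    (hu : x' - x = (4*m+12)*α - (m+4)*β)
    (hv : y' - y = (2*m+6+e)*β - (2*m+5)*α) :
    1 ≤ (2*m+7)*α + c*β := by
  rcases lt_trichotomy β 0 with hβ1 | rfl | hβ1
  · -- β ≤ -1
    have hβ1 : β ≤ -1 := by omega
    have hα1 : α ≤ -1 := by
      by_contra h
      push_neg at h
      have h0 : 0 ≤ α := by omega
      nlinarith [mul_nonneg (by linarith : (0:ℤ) ≤ 2*m+5) h0,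
        mul_nonpos_of_nonneg_of_nonpos (by linarith : (0:ℤ) ≤ 2*m+6+e) (by linarith : β ≤ 0)]
    have hβα : α ≤ β := by
      by_contra h
      push_neg at h
      have h1 : β ≤ α - 1 := by omega
      nlinarith [mul_le_mul_of_nonneg_left h1 (by linarith : (0:ℤ) ≤ 2*m+6+e),
        mul_nonpos_of_nonneg_of_nonpos (by linarith : (0:ℤ) ≤ e+1) (by linarith : α ≤ 0)]
    have hα2 : α = -1 := by
      by_contra h
      have h2 : α ≤ -2 := by omega
      nlinarith [mul_le_mul_of_nonneg_left hβα (by linarith : (0:ℤ) ≤ m+4),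
        mul_le_mul_of_nonneg_left h2 (by linarith : (0:ℤ) ≤ 3*m+8)]
    subst hα2
    have hβ2 : β = -1 := by omega
    subst hβ2
    exfalso
    have h3 : x' - x = -(3*m+8) := by linarith
    have h4 : y' - y = -(e+1) := by linarith
    rcases hP with h | h <;> omega
  · -- β = 0
    rcases lt_trichotomy α 0 with hα1 | rfl | hα1
    · exfalso
      have h2 : α ≤ -1 := by omega
      nlinarith [mul_le_mul_of_nonneg_left h2 (by linarith : (0:ℤ) ≤ 4*m+12)]
    · exfalso; exact hne ⟨by omega, by omega⟩
    · have h2 : 1 ≤ α := by omega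
      nlinarith [mul_le_mul_of_nonneg_left h2 (by linarith : (0:ℤ) ≤ 2*m+7)]
  · -- β ≥ 1
    have hβ2 : 1 ≤ β := by omega
    have hα0 : 0 ≤ α := by
      by_contra h
      push_neg at h
      have h2 : α ≤ -1 := by omega
      nlinarith [mul_le_mul_of_nonneg_left h2 (by linarith : (0:ℤ) ≤ 4*m+12),
        mul_le_mul_of_nonneg_left hβ2 (by linarith : (0:ℤ) ≤ m+4)]
    nlinarith [mul_nonneg (by linarith : (0:ℤ) ≤ 2*m+7) hα0,
      mul_le_mul_of_nonneg_left hβ2 (by linarith : (0:ℤ) ≤ c)]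

lemma key_min (a m e x y x' y' : ℤ) (ha : 5 ≤ a) (hm : 0 ≤ m) (he0 : 0 ≤ e)
    (he : a*(m+1) = 6*m+17+4*e)
    (hx0 : 0 ≤ x) (hy0 : 0 ≤ y) (hx'0 : 0 ≤ x') (hy'0 : 0 ≤ y')
    (hxb : x < 4*m+12) (hyb : y < 2*m+6+e) (hP : x < 3*m+8 ∨ y < e+1)
    (hne : ¬ (x = x' ∧ y = y'))
    (hdvd : (a*(m+3)*(m+1)+1 : ℤ) ∣ (x'*(a*(m+4)*(m+2)+1) + y'*(a*(m+5)*(m+3)+1)) - (x*(a*(m+4)*(m+2)+1) + y*(a*(m+5)*(m+3)+1))) :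
    x*(a*(m+4)*(m+2)+1) + y*(a*(m+5)*(m+3)+1) + (a*(m+3)*(m+1)+1) ≤ x'*(a*(m+4)*(m+2)+1) + y'*(a*(m+5)*(m+3)+1) := by
  obtain ⟨d, hd⟩ := hdvd
  have hcop : IsCoprime (a*(m+3)*(m+1)+1 : ℤ) a := ⟨1, -((m+3)*(m+1)), by ring⟩
  have hd1 : (a*(m+3)*(m+1)+1 : ℤ) ∣ a * ((2*m+5)*(x'-x) + (4*m+12)*(y'-y)) :=
    ⟨d - (x'-x) - (y'-y), by linear_combination hd⟩
  obtain ⟨β, hβ⟩ := hcop.dvd_of_dvd_mul_left hd1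
  have hm3 : (m+3 : ℤ) ∣ ((x'-x) + (m+4)*β) :=
    ⟨2*(x'-x) + 4*(y'-y) - a*(m+1)*β + β, by linear_combination -hβ⟩
  have hodd : Odd (a * (m+1)) := by rw [he]; exact ⟨3*m+8+2*e, by ring⟩
  have hm2 : ∃ c, m = 2*c := by
    rcases Int.odd_mul.mp hodd with ⟨-, ⟨j, hj⟩⟩
    exact ⟨j, by omega⟩
  have h4 : (4 : ℤ) ∣ ((x'-x) + (m+4)*β) := by
    obtain ⟨c, hc⟩ := hm2
    rcases Int.even_or_odd c with ⟨k, hk⟩ | ⟨k, hk⟩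
    · have hm' : m = 4*k := by omega
      subst hm'
      have h' : a + 4*(a*k) = 24*k+17+4*e := by linear_combination he
      obtain ⟨P, hP'⟩ : ∃ P, a*k = P := ⟨_, rfl⟩
      rw [hP'] at h'
      obtain ⟨t, rfl⟩ : ∃ t, a = 4*t+1 := ⟨(a-1)/4, by omega⟩
      exact ⟨(16*t*k^2+16*t*k+3*t+4*k^2+4*k+1)*β - (2*k+1)*(x'-x) - (4*k+3)*(y'-y) + (k+1)*β,
        by linear_combination hβ⟩
    · have hm' : m = 4*k+2 := by omega
      subst hm'
      have h' : 3*a + 4*(a*k) = 24*k+29+4*e := by linear_combination he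
      obtain ⟨P, hP'⟩ : ∃ P, a*k = P := ⟨_, rfl⟩
      rw [hP'] at h'
      obtain ⟨t, rfl⟩ : ∃ t, a = 4*t+3 := ⟨(a-3)/4, by omega⟩
      exact ⟨(16*t*k^2+32*t*k+15*t+12*k^2+24*k+11)*β - (2*k+2)*(x'-x) - (4*k+5)*(y'-y) + (k+2)*β,
        by linear_combination hβ⟩
  have hcop4 : IsCoprime (4 : ℤ) (m+3) := by
    obtain ⟨c, rfl⟩ := hm2
    exact ⟨-(c^2+3*c+2), 2*c+3, by ring⟩
  have h12 : (4*m+12 : ℤ) ∣ ((x'-x) + (m+4)*β) := by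
    have h := hcop4.mul_dvd h4 hm3
    have h' : (4*(m+3) : ℤ) = 4*m+12 := by ring
    rwa [h'] at h
  obtain ⟨α, hα⟩ := h12
  have hv : y' - y = (2*m+6+e)*β - (2*m+5)*α := by
    have h0 : (4*m+12 : ℤ) ≠ 0 := by omega
    refine mul_left_cancel₀ h0 ?_
    linear_combination hβ - (2*m+5)*hα + (m+3)*β*he
  have hu : x' - x = (4*m+12)*α - (m+4)*β := by linear_combination hα
  have hval : (x'*(a*(m+4)*(m+2)+1) + y'*(a*(m+5)*(m+3)+1)) - (x*(a*(m+4)*(m+2)+1) + y*(a*(m+5)*(m+3)+1))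
      = ((2*m+7)*α + (a+e+m+2)*β) * (a*(m+3)*(m+1)+1) := by
    linear_combination (a*(m+4)*(m+2)+1)*hu + (a*(m+5)*(m+3)+1)*hv + (-(a*(m+3))*β)*he
  have hδ : 1 ≤ (2*m+7)*α + (a+e+m+2)*β :=
    delta_pos m e (a+e+m+2) x y x' y' α β hm he0 (by linarith) hx0 hy0 hx'0 hy'0 hxb hyb hP hne hu hv
  have hs0 : (0:ℤ) < a*(m+3)*(m+1)+1 := by positivity
  have h1 : 1 * (a*(m+3)*(m+1)+1) ≤ ((2*m+7)*α + (a+e+m+2)*β) * (a*(m+3)*(m+1)+1) :=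
    mul_le_mul_of_nonneg_right hδ hs0.le
  linarith [hval, h1]

lemma final_identity (a m e g sval sico sx1 sx2 sy1 sy2 : ℚ)
    (hs : a*(m+3)*(m+1)+1 ≠ 0)
    (he : a*(m+1) = 6*m+17+4*e)
    (h1 : 2*sx1 = (3*m+8)*(3*m+7)) (h2 : 2*sx2 = (4*m+12)*(4*m+11))
    (h3 : 2*sy1 = (2*m+6+e)*(2*m+5+e)) (h4 : 2*sy2 = (e+1)*e)
    (h5 : sx1 + sico = sx2)
    (h6 : sval = (2*m+6+e)*sx1*(a*(m+4)*(m+2)+1) + (3*m+8)*sy1*(a*(m+5)*(m+3)+1)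
        + (e+1)*sico*(a*(m+4)*(m+2)+1) + (m+4)*sy2*(a*(m+5)*(m+3)+1))
    (h7 : 2*sval = 2*(a*(m+3)*(m+1)+1)*g + (a*(m+3)*(m+1)+1)*((a*(m+3)*(m+1)+1)-1)) :
    8*g = (a^2+16*a-12)*(m+3)^3 - (12*a+8)*(m+3)^2 - (4*a^2+14*a-23)*(m+3) + 4*a - 6 := by
  have h2s : (2*(a*(m+3)*(m+1)+1)) ≠ 0 := by
    intro h; apply hs; linarith
  apply mul_left_cancel₀ h2s
  linear_combination (-8 : ℚ)*h7 + 16*h6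
    + (16 + 16*e + 128*a + 128*a*e + 96*a*m + 96*a*m*e + 16*a*m^2 + 16*a*m^2*e)*h5
    + (40 + 16*m + 320*a + 368*a*m + 136*a*m^2 + 16*a*m^3)*h1
    + (8 + 8*e + 64*a + 64*a*e + 48*a*m + 48*a*m*e + 8*a*m^2 + 8*a*m^2*e)*h2
    + (64 + 24*m + 960*a + 872*a*m + 256*a*m^2 + 24*a*m^3)*h3
    + (32 + 8*m + 480*a + 376*a*m + 96*a*m^2 + 8*a*m^3)*h4
    + (-346 - 24*e - 246*m - 8*m*e - 44*m^2 - 3348*a - 360*a*e - 4650*a*m - 312*a*m*e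
       - 2384*a*m^2 - 88*a*m^2*e - 534*a*m^3 - 8*a*m^3*e - 44*a*m^4 - 90*a^2 - 168*a^2*m
       - 100*a^2*m^2 - 24*a^2*m^3 - 2*a^2*m^4)*he


lemma mem_closure_triple {s q r m : ℕ} :
    m ∈ AddSubmonoid.closure ({s, q, r} : Set ℕ) ↔ ∃ z x y : ℕ, m = z * s + x * q + y * r := by
  constructor
  · intro h
    induction h using AddSubmonoid.closure_induction with
    | mem w hw =>
      rcases hw with rfl | rfl | rfl
      · exact ⟨1, 0, 0, by ring⟩
      · exact ⟨0, 1, 0, by ring⟩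
      · exact ⟨0, 0, 1, by ring⟩
    | zero => exact ⟨0, 0, 0, by ring⟩
    | add u v hu hv ihu ihv =>
      obtain ⟨z1, x1, y1, rfl⟩ := ihu
      obtain ⟨z2, x2, y2, rfl⟩ := ihv
      exact ⟨z1 + z2, x1 + x2, y1 + y2, by ring⟩
  · rintro ⟨z, x, y, rfl⟩
    have hs : s ∈ AddSubmonoid.closure ({s, q, r} : Set ℕ) := AddSubmonoid.subset_closure (by simp)
    have hq : q ∈ AddSubmonoid.closure ({s, q, r} : Set ℕ) := AddSubmonoid.subset_closure (by simp)
    have hr : r ∈ AddSubmonoid.closure ({s, q, r} : Set ℕ) := AddSubmonoid.subset_closure (by simp)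
    have h1 := AddSubmonoid.nsmul_mem _ hs z
    have h2 := AddSubmonoid.nsmul_mem _ hq x
    have h3 := AddSubmonoid.nsmul_mem _ hr y
    simpa [smul_eq_mul] using add_mem (add_mem h1 h2) h3

lemma genus_aux (a m e : ℕ) (ha : 5 ≤ a) (he : a*(m+1) = 6*m+17+4*e) :
    8 * (Set.ncard {w : ℕ | w ∉ AddSubmonoid.closure
        ({a*(m+3)*(m+1)+1, a*(m+4)*(m+2)+1, a*(m+5)*(m+3)+1} : Set ℕ)} : ℚ)
    = ((a:ℚ)^2+16*a-12)*((m:ℚ)+3)^3 - (12*(a:ℚ)+8)*((m:ℚ)+3)^2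
      - (4*(a:ℚ)^2+14*(a:ℚ)-23)*((m:ℚ)+3) + 4*(a:ℚ) - 6 := by
  set s := a*(m+3)*(m+1)+1 with hs_def
  set q := a*(m+4)*(m+2)+1 with hq_def
  set r := a*(m+5)*(m+3)+1 with hr_def
  have hs1 : 1 ≤ s := by omega
  set f : ℕ×ℕ → ℕ := fun p => p.1*q + p.2*r with hf_def
  set A : Finset (ℕ×ℕ) := Finset.range (3*m+8) ×ˢ Finset.range (2*m+6+e) with hA_def
  set B : Finset (ℕ×ℕ) := Finset.Ico (3*m+8) (4*m+12) ×ˢ Finset.range (e+1) with hB_def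
  set P : Finset (ℕ×ℕ) := A ∪ B with hP_def
  have hmemP : ∀ p : ℕ×ℕ, p ∈ P ↔ (p.1 < 4*m+12 ∧ p.2 < 2*m+6+e ∧ (p.1 < 3*m+8 ∨ p.2 < e+1)) := by
    intro p
    simp only [hP_def, hA_def, hB_def, Finset.mem_union, Finset.mem_product, Finset.mem_range,
      Finset.mem_Ico]
    omega
  -- key minimality in ℕ
  have hkey : ∀ x y x' y' : ℕ, x < 4*m+12 → y < 2*m+6+e → (x < 3*m+8 ∨ y < e+1) →
      ¬(x = x' ∧ y = y') → (x*q + y*r) % s = (x'*q + y'*r) % s →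
      x*q + y*r + s ≤ x'*q + y'*r := by
    intro x y x' y' hxb hyb hPc hne hmod
    have hdvd : ((a:ℤ)*(m+3)*(m+1)+1) ∣
        ((x':ℤ)*((a:ℤ)*(m+4)*(m+2)+1) + (y':ℤ)*((a:ℤ)*(m+5)*(m+3)+1))
        - ((x:ℤ)*((a:ℤ)*(m+4)*(m+2)+1) + (y:ℤ)*((a:ℤ)*(m+5)*(m+3)+1)) := by
      have h := (Nat.modEq_iff_dvd (n := s)).mp hmod
      push_cast [hs_def, hq_def, hr_def] at h ⊢
      convert h using 1 <;> ring
    have h := key_min a m e x y x' y' (by exact_mod_cast ha) (by positivity) (by positivity)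
      (by exact_mod_cast he) (by positivity) (by positivity) (by positivity) (by positivity)
      (by exact_mod_cast hxb) (by exact_mod_cast hyb)
      (by rcases hPc with h | h; exact Or.inl (by exact_mod_cast h); exact Or.inr (by exact_mod_cast h))
      (by intro ⟨h1, h2⟩; exact hne ⟨by exact_mod_cast h1, by exact_mod_cast h2⟩) hdvd
    have h' : (↑(x*q + y*r + s) : ℤ) ≤ ↑(x'*q + y'*r) := by
      push_cast [hs_def, hq_def, hr_def]
      convert h using 1 <;> ring
    exact_mod_cast h'
  have hinj : ∀ p ∈ P, ∀ p' ∈ P, f p % s = f p' % s → p = p' := by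
    intro p hp p' hp' hmod
    by_contra hne
    have h1 := (hmemP p).mp hp
    have h2 := (hmemP p').mp hp'
    have e1 := hkey p.1 p.2 p'.1 p'.2 h1.1 h1.2.1 h1.2.2
      (by intro ⟨hx, hy⟩; exact hne (Prod.ext hx hy)) hmod
    have e2 := hkey p'.1 p'.2 p.1 p.2 h2.1 h2.2.1 h2.2.2
      (by intro ⟨hx, hy⟩; exact hne (Prod.ext hx.symm hy.symm)) hmod.symm
    omega
  have hdisj : Disjoint A B := by
    rw [Finset.disjoint_left]
    intro p hpA hpB
    simp only [hA_def, hB_def, Finset.mem_product, Finset.mem_range, Finset.mem_Ico] at hpA hpB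
    omega
  have hcardP : P.card = s := by
    rw [hP_def, Finset.card_union_of_disjoint hdisj]
    simp only [hA_def, hB_def, Finset.card_product, Finset.card_range, Nat.card_Ico]
    have h1 : 4*m+12 - (3*m+8) = m+4 := by omega
    rw [h1, hs_def]
    zify
    zify at he
    linear_combination (-((m:ℤ)+3))*he
  
  have himage : P.image (fun p => f p % s) = Finset.range s := by
    apply Finset.eq_of_subset_of_card_le
    · intro t ht
      simp only [Finset.mem_image] at ht
      obtain ⟨p, hp, rfl⟩ := ht
      exact Finset.mem_range.mpr (Nat.mod_lt _ (by omega))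
    · rw [Finset.card_range, Finset.card_image_of_injOn hinj, hcardP]
  have hsurj : ∀ t, t < s → ∃ p ∈ P, f p % s = t := by
    intro t ht
    have : t ∈ P.image (fun p => f p % s) := by rw [himage]; exact Finset.mem_range.mpr ht
    simpa only [Finset.mem_image] using this
  -- closure characterization
  have hclosure : ∀ w : ℕ, w ∈ AddSubmonoid.closure ({s, q, r} : Set ℕ) ↔
      ∃ p ∈ P, f p % s = w % s ∧ f p ≤ w := by
    intro w
    rw [mem_closure_triple]
    constructor
    · rintro ⟨z, x, y, rfl⟩
      obtain ⟨p, hp, hpmod⟩ := hsurj ((x*q + y*r) % s) (Nat.mod_lt _ (by omega))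
      have hzmod : (z*s + x*q + y*r) % s = (x*q + y*r) % s := by
        rw [show z*s + x*q + y*r = x*q + y*r + z*s by ring, Nat.add_mul_mod_self_right]
      refine ⟨p, hp, ?_, ?_⟩
      · rw [hpmod, hzmod]
      · by_cases hc : x = p.1 ∧ y = p.2
        · simp only [hf_def]
          rw [← hc.1, ← hc.2]
          omega
        · have h1 := (hmemP p).mp hp
          have := hkey p.1 p.2 x y h1.1 h1.2.1 h1.2.2
            (by intro ⟨ha1, ha2⟩; exact hc ⟨ha1.symm, ha2.symm⟩)
            (by simpa only [hf_def] using hpmod)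
          simp only [hf_def]
          omega
    · rintro ⟨p, hp, hpmod, hple⟩
      have hdvd : s ∣ w - f p := (Nat.modEq_iff_dvd' hple).mp hpmod
      obtain ⟨c, hc⟩ := hdvd
      rw [show s*c = c*s from Nat.mul_comm s c] at hc
      exact ⟨c, p.1, p.2, by simp only [hf_def] at hc hple ⊢; omega⟩
  
  -- the gap set
  set G : Finset ℕ := P.biUnion (fun p => (Finset.range (f p / s)).image (fun j => f p % s + j*s))
    with hG_def
  have hmemG : ∀ w : ℕ, w ∈ G ↔ ∃ p ∈ P, ∃ j < f p / s, w = f p % s + j*s := by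
    intro w
    simp only [hG_def, Finset.mem_biUnion, Finset.mem_image, Finset.mem_range]
    constructor
    · rintro ⟨p, hp, j, hj, rfl⟩; exact ⟨p, hp, j, hj, rfl⟩
    · rintro ⟨p, hp, j, hj, rfl⟩; exact ⟨p, hp, j, hj, rfl⟩
  have hGmod : ∀ (p : ℕ×ℕ) (j : ℕ), j < f p / s → (f p % s + j*s) % s = f p % s := by
    intro p j hj
    rw [Nat.add_mul_mod_self_right, Nat.mod_mod_of_dvd _ dvd_rfl]
  have hGlt : ∀ (p : ℕ×ℕ) (j : ℕ), j < f p / s → f p % s + j*s + s ≤ f p := by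
    intro p j hj
    have h1 : (j+1) * s ≤ (f p / s) * s := Nat.mul_le_mul_right s hj
    have h2 : f p % s + (f p / s) * s = f p := Nat.mod_add_div' (f p) s
    nlinarith
  have hsetG : {w : ℕ | w ∉ AddSubmonoid.closure ({s, q, r} : Set ℕ)} = ↑G := by
    ext w
    simp only [Set.mem_setOf_eq, Finset.coe_sort_coe, Finset.mem_coe]
    constructor
    · intro hw
      obtain ⟨p, hp, hpmod⟩ := hsurj (w % s) (Nat.mod_lt _ (by omega))
      have hnle : ¬ (f p ≤ w) := by
        intro hle
        exact hw ((hclosure w).mpr ⟨p, hp, hpmod, hle⟩)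
      rw [hmemG]
      refine ⟨p, hp, w / s, ?_, ?_⟩
      · by_contra hcon
        push_neg at hcon
        have h1 : (f p / s) * s ≤ (w / s) * s := Nat.mul_le_mul_right s hcon
        have h2 : f p % s + (f p / s) * s = f p := Nat.mod_add_div' (f p) s
        have h3 : w % s + (w / s) * s = w := Nat.mod_add_div' w s
        omega
      · have h3 : w % s + (w / s) * s = w := Nat.mod_add_div' w s
        omega
    · intro hw hclos
      rw [hmemG] at hw
      obtain ⟨p, hp, j, hj, rfl⟩ := hw
      obtain ⟨p', hp', hmod', hle'⟩ := (hclosure _).mp hclos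
      rw [hGmod p j hj] at hmod'
      have hpp : p' = p := hinj p' hp' p hp hmod'
      rw [hpp] at hle'
      have := hGlt p j hj
      omega
  -- counting
  have hcardG : G.card = ∑ p ∈ P, f p / s := by
    rw [hG_def]
    rw [Finset.card_biUnion]
    · apply Finset.sum_congr rfl
      intro p hp
      have hinj2 : Set.InjOn (fun j => f p % s + j*s) (Finset.range (f p / s)) := by
        intro j1 h1 j2 h2 hj
        have hj' : f p % s + j1*s = f p % s + j2*s := hj
        have hj2 : j1 * s = j2 * s := by omega
        exact Nat.eq_of_mul_eq_mul_right (by omega) hj2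
      rw [Finset.card_image_of_injOn hinj2, Finset.card_range]
    · intro p hp p' hp' hne
      rw [Function.onFun, Finset.disjoint_left]
      intro w hw hw'
      simp only [Finset.mem_image, Finset.mem_range] at hw hw'
      obtain ⟨j, hj, rfl⟩ := hw
      obtain ⟨j', hj', hww⟩ := hw'
      apply hne
      apply hinj p hp p' hp'
      rw [← hGmod p j hj, ← hGmod p' j' hj', hww]
  
  -- sums
  have hmodsum : ∑ t ∈ Finset.range s, t = ∑ p ∈ P, f p % s := by
    rw [← himage]
    exact Finset.sum_image hinj
  have hdivmod : ∑ p ∈ P, f p = s * (∑ p ∈ P, f p / s) + ∑ p ∈ P, f p % s := by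
    rw [Finset.mul_sum, ← Finset.sum_add_distrib]
    apply Finset.sum_congr rfl
    intro p hp
    exact (Nat.div_add_mod (f p) s).symm
  have sum_box : ∀ (C D : Finset ℕ),
      ∑ p ∈ C ×ˢ D, (p.1*q + p.2*r) = D.card * (∑ x ∈ C, x) * q + C.card * (∑ y ∈ D, y) * r := by
    intro C D
    rw [Finset.sum_product]
    simp only [Finset.sum_add_distrib, Finset.sum_const, smul_eq_mul, ← Finset.sum_mul,
      ← Finset.mul_sum]
    ring
  have hsum2 : ∑ p ∈ P, f p = (2*m+6+e) * (∑ x ∈ Finset.range (3*m+8), x) * q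
      + (3*m+8) * (∑ y ∈ Finset.range (2*m+6+e), y) * r
      + (e+1) * (∑ x ∈ Finset.Ico (3*m+8) (4*m+12), x) * q
      + (m+4) * (∑ y ∈ Finset.range (e+1), y) * r := by
    rw [hP_def, Finset.sum_union hdisj, hA_def, hB_def]
    rw [show (fun p : ℕ×ℕ => f p) = (fun p : ℕ×ℕ => p.1*q + p.2*r) from rfl]
    rw [sum_box, sum_box]
    simp only [Finset.card_range, Nat.card_Ico]
    rw [show 4*m+12 - (3*m+8) = m+4 by omega]
    ring
  have g1 : 2 * (∑ i ∈ Finset.range (3*m+8), i) = (3*m+8)*(3*m+7) := by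
    have h := Finset.sum_range_id_mul_two (3*m+8)
    rw [show (3*m+8-1) = 3*m+7 by omega] at h
    omega
  have g2 : 2 * (∑ i ∈ Finset.range (4*m+12), i) = (4*m+12)*(4*m+11) := by
    have h := Finset.sum_range_id_mul_two (4*m+12)
    rw [show (4*m+12-1) = 4*m+11 by omega] at h
    omega
  have g3 : 2 * (∑ i ∈ Finset.range (2*m+6+e), i) = (2*m+6+e)*(2*m+5+e) := by
    have h := Finset.sum_range_id_mul_two (2*m+6+e)
    rw [show (2*m+6+e-1) = 2*m+5+e by omega] at h
    omega
  have g4 : 2 * (∑ i ∈ Finset.range (e+1), i) = (e+1)*e := by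
    have h := Finset.sum_range_id_mul_two (e+1)
    rw [show (e+1-1) = e by omega] at h
    omega
  have g5 : (∑ i ∈ Finset.range (3*m+8), i) + (∑ i ∈ Finset.Ico (3*m+8) (4*m+12), i)
      = ∑ i ∈ Finset.range (4*m+12), i := by
    rw [Finset.range_eq_Ico, Finset.range_eq_Ico]
    exact Finset.sum_Ico_consecutive (fun i : ℕ => i) (by omega : 0 ≤ 3*m+8) (by omega : 3*m+8 ≤ 4*m+12)
  have gs : 2 * (∑ t ∈ Finset.range s, t) = s * (s - 1) := by
    have h := Finset.sum_range_id_mul_two s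
    omega
  -- assembly over ℚ
  rw [hsetG, Set.ncard_coe_finset]
  have hsQ : ((a:ℚ)*((m:ℚ)+3)*((m:ℚ)+1)+1) ≠ 0 := by positivity
  have heQ : (a:ℚ)*((m:ℚ)+1) = 6*(m:ℚ)+17+4*(e:ℚ) := by exact_mod_cast he
  have h1Q : 2*((∑ i ∈ Finset.range (3*m+8), i : ℕ) : ℚ) = (3*(m:ℚ)+8)*(3*(m:ℚ)+7) := by
    exact_mod_cast g1
  have h2Q : 2*((∑ i ∈ Finset.range (4*m+12), i : ℕ) : ℚ) = (4*(m:ℚ)+12)*(4*(m:ℚ)+11) := by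
    exact_mod_cast g2
  have h3Q : 2*((∑ i ∈ Finset.range (2*m+6+e), i : ℕ) : ℚ) = (2*(m:ℚ)+6+(e:ℚ))*(2*(m:ℚ)+5+(e:ℚ)) := by
    exact_mod_cast g3
  have h4Q : 2*((∑ i ∈ Finset.range (e+1), i : ℕ) : ℚ) = ((e:ℚ)+1)*(e:ℚ) := by
    exact_mod_cast g4
  have h5Q : ((∑ i ∈ Finset.range (3*m+8), i : ℕ) : ℚ) + ((∑ i ∈ Finset.Ico (3*m+8) (4*m+12), i : ℕ) : ℚ)
      = ((∑ i ∈ Finset.range (4*m+12), i : ℕ) : ℚ) := by exact_mod_cast g5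
  have h6Q : ((∑ p ∈ P, f p : ℕ) : ℚ) =
      (2*(m:ℚ)+6+(e:ℚ))*((∑ i ∈ Finset.range (3*m+8), i : ℕ) : ℚ)*((a:ℚ)*((m:ℚ)+4)*((m:ℚ)+2)+1)
      + (3*(m:ℚ)+8)*((∑ i ∈ Finset.range (2*m+6+e), i : ℕ) : ℚ)*((a:ℚ)*((m:ℚ)+5)*((m:ℚ)+3)+1)
      + ((e:ℚ)+1)*((∑ i ∈ Finset.Ico (3*m+8) (4*m+12), i : ℕ) : ℚ)*((a:ℚ)*((m:ℚ)+4)*((m:ℚ)+2)+1)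
      + ((m:ℚ)+4)*((∑ i ∈ Finset.range (e+1), i : ℕ) : ℚ)*((a:ℚ)*((m:ℚ)+5)*((m:ℚ)+3)+1) := by
    rw [hq_def, hr_def] at hsum2
    exact_mod_cast hsum2
  have h7Q : 2*((∑ p ∈ P, f p : ℕ) : ℚ) = 2*((a:ℚ)*((m:ℚ)+3)*((m:ℚ)+1)+1)*((G.card : ℕ) : ℚ)
      + ((a:ℚ)*((m:ℚ)+3)*((m:ℚ)+1)+1)*(((a:ℚ)*((m:ℚ)+3)*((m:ℚ)+1)+1)-1) := by
    have hN : 2 * (∑ p ∈ P, f p) = 2 * s * G.card + s * (s-1) := by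
      rw [hdivmod, hcardG, Nat.mul_assoc]
      omega
    rw [hs_def] at hN
    have hcast : ((2 * (∑ p ∈ P, f p) : ℕ) : ℚ) = ((2 * (a*(m+3)*(m+1)+1) * G.card + (a*(m+3)*(m+1)+1) * ((a*(m+3)*(m+1)+1)-1) : ℕ) : ℚ) := by
      exact_mod_cast hN
    push_cast [Nat.cast_sub (show 1 ≤ a*(m+3)*(m+1)+1 by omega)] at hcast ⊢
    linear_combination hcast
  have hfin := final_identity (a:ℚ) (m:ℚ) (e:ℚ) ((G.card : ℕ) : ℚ)
    ((∑ p ∈ P, f p : ℕ) : ℚ)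
    ((∑ i ∈ Finset.Ico (3*m+8) (4*m+12), i : ℕ) : ℚ)
    ((∑ i ∈ Finset.range (3*m+8), i : ℕ) : ℚ)
    ((∑ i ∈ Finset.range (4*m+12), i : ℕ) : ℚ)
    ((∑ i ∈ Finset.range (2*m+6+e), i : ℕ) : ℚ)
    ((∑ i ∈ Finset.range (e+1), i : ℕ) : ℚ)
    hsQ heQ h1Q h2Q h3Q h4Q h5Q h6Q h7Q
  linear_combination hfin


/-- The 2-step star number `S_{a,n} = a·n·(n−2) + 1`. -/
def twoStepStar (a n : ℕ) : ℕ := a * n * (n - 2) + 1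

/-- The Sylvester number (genus) of a set `A` of natural numbers: the number of nonnegative
integers that are not a nonnegative integer linear combination of elements of `A`. -/
noncomputable def sylvesterNumber (A : Set ℕ) : ℕ :=
  Set.ncard {m : ℕ | m ∉ AddSubmonoid.closure A}

theorem sylvester_twoStepStar_case3 (a n : ℕ) (ha : 5 ≤ a) (hn : 3 ≤ n) (hbig : 6 * n - 1 ≤ a * (n - 2)) (hmod : (a % 4 = 1 ∧ n % 4 = 3) ∨ (a % 4 = 3 ∧ n % 4 = 1)) :
    (sylvesterNumber
        {twoStepStar a n, twoStepStar a (n + 1), twoStepStar a (n + 2)} : ℚ) =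
      (((a : ℚ) ^ 2 + 16 * a - 12) * n ^ 3 - (12 * (a : ℚ) + 8) * n ^ 2 - (4 * (a : ℚ) ^ 2 + 14 * a - 23) * n + 4 * a - 6) / 8 := by
  obtain ⟨m, rfl⟩ : ∃ m, n = m + 3 := ⟨n - 3, by omega⟩
  have hsub : m + 3 - 2 = m + 1 := by omega
  have hbig' : 6 * m + 17 ≤ a * (m + 1) := by
    rw [hsub] at hbig
    omega
  have hmm : Nat.mul_mod a (m+1) 4 = Nat.mul_mod a (m+1) 4 := rfl
  have hmod4 : a * (m + 1) % 4 = 1 := by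
    have h := Nat.mul_mod a (m+1) 4
    rcases hmod with ⟨ha4, hn4⟩ | ⟨ha4, hn4⟩
    · have hm1 : (m+1) % 4 = 1 := by omega
      rw [ha4, hm1] at h
      omega
    · have hm1 : (m+1) % 4 = 3 := by omega
      rw [ha4, hm1] at h
      omega
  have hm4 : m % 4 = 0 ∨ m % 4 = 2 := by
    rcases hmod with ⟨-, hn4⟩ | ⟨-, hn4⟩
    · left; omega
    · right; omega
  obtain ⟨e, he⟩ : ∃ e, a * (m + 1) = 6 * m + 17 + 4 * e := by
    refine ⟨(a * (m + 1) - (6 * m + 17)) / 4, ?_⟩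
    rcases hm4 with h | h <;> omega
  have ht1 : twoStepStar a (m + 3) = a*(m+3)*(m+1)+1 := by
    unfold twoStepStar
    rw [hsub]
  have ht2 : twoStepStar a (m + 3 + 1) = a*(m+4)*(m+2)+1 := by
    unfold twoStepStar
    have : m + 3 + 1 - 2 = m + 2 := by omega
    rw [this]
  have ht3 : twoStepStar a (m + 3 + 2) = a*(m+5)*(m+3)+1 := by
    unfold twoStepStar
    have : m + 3 + 2 - 2 = m + 3 := by omega
    rw [this]
  rw [ht1, ht2, ht3]
  unfold sylvesterNumber
  have hfin := genus_aux a m e ha he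
  rw [eq_div_iff (by norm_num : (8:ℚ) ≠ 0)]
  push_cast
  push_cast at hfin
  linear_combination hfin
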